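/- Let X be a real or complex normed linear space and 1 ≤ p < ∞. If a series ∑_{n=0}^∞ u_n with terms in X is (C,1) summable in X to some S ∈ X and satisfies ∑_{n=1}^∞ n^{p-1} ‖u_n‖^p < ∞, then the series converges in X (to S). -/

import Mathlib

open Filter Finset Topology

/-- **Hardy–Littlewood Tauberian theorem in a normed space** (Corollary 2). Let `1 ≤ p < ∞`.
If a series `∑ u_n` in a real or complex normed linear space `X` is `(C,1)` summable to
`S ∈ X` and satisfies `∑_{n=1}^∞ n^{p-1} ‖u_n‖^p < ∞`, then the series converges in `X`
to `S`. -/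
theorem tauberian_cesaro_hardy_littlewood
    {X : Type*} [NormedAddCommGroup X] [NormedSpace ℝ X]
    (u : ℕ → X) (S : X) (p : ℝ) (hp : 1 ≤ p)
    (hC1 : Tendsto (fun n : ℕ =>
        ((n : ℝ) + 1)⁻¹ • ∑ i ∈ range (n + 1), ∑ k ∈ range (i + 1), u k)
      atTop (𝓝 S))
    (hHL : Summable fun n : ℕ => ((n : ℝ) + 1) ^ (p - 1) * ‖u (n + 1)‖ ^ p) :
    Tendsto (fun n : ℕ => ∑ k ∈ range (n + 1), u k) atTop (𝓝 S) := by
  have hp0 : (0:ℝ) < p := lt_of_lt_of_le one_pos hp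
  set a : ℕ → ℝ := fun j => ((j:ℝ)+1) * ‖u (j+1)‖ with ha
  set g : ℕ → ℝ := fun j => ((j:ℝ)+1) ^ (p-1) * ‖u (j+1)‖ ^ p with hgdef
  have hg0 : ∀ j, 0 ≤ g j := fun j =>
    mul_nonneg (Real.rpow_nonneg (by positivity) _) (Real.rpow_nonneg (norm_nonneg _) _)
  have ha0 : ∀ j, 0 ≤ a j := fun j => mul_nonneg (by positivity) (norm_nonneg _)
  set T : ℕ → ℝ := fun m => ∑' j, g (j + m) with hTdef
  have hTsum : ∀ m, Summable fun j => g (j + m) := fun m => (summable_nat_add_iff m).2 hHL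
  have hT0 : ∀ m, 0 ≤ T m := fun m => tsum_nonneg fun j => hg0 _
  have hTtend : Tendsto T atTop (𝓝 0) := tendsto_sum_nat_add g
  -- key Hölder estimate
  have key : ∀ m n : ℕ, ∑ j ∈ Ico m n, a j ≤ ((n:ℝ)+1) * T m ^ (1/p) := by
    intro m n
    have htail : ∑ j ∈ Ico m n, g j ≤ T m := by
      rw [Finset.sum_Ico_eq_sum_range]
      calc ∑ i ∈ range (n-m), g (m+i) = ∑ i ∈ range (n-m), g (i+m) :=
            Finset.sum_congr rfl fun i _ => by rw [add_comm]
        _ ≤ T m := Summable.sum_le_tsum _ (fun i _ => hg0 _) (hTsum m)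
    have hgsum0 : 0 ≤ ∑ j ∈ Ico m n, g j := Finset.sum_nonneg fun j _ => hg0 j
    rcases le_or_gt n m with h | hmn
    · rw [Finset.Ico_eq_empty (by omega)]
      have hTp : (0:ℝ) ≤ T m ^ (1/p) := Real.rpow_nonneg (hT0 m) _
      simp only [Finset.sum_empty]
      positivity
    · have hnpos : (0:ℝ) < n := by
        have : 0 < n := Nat.lt_of_le_of_lt (Nat.zero_le m) hmn
        exact_mod_cast this
      have hjle : ∀ j ∈ Ico m n, (j:ℝ) + 1 ≤ n := by
        intro j hj
        have := (Finset.mem_Ico.1 hj).2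
        exact_mod_cast Nat.succ_le_of_lt this
      rcases eq_or_lt_of_le hp with hp1 | hp1
      · -- p = 1
        subst hp1
        have hT' : T m ^ ((1:ℝ)/1) = T m := by norm_num
        rw [hT']
        calc ∑ j ∈ Ico m n, a j ≤ ∑ j ∈ Ico m n, (n:ℝ) * g j := by
              refine Finset.sum_le_sum fun j hj => ?_
              have hgj : g j = ‖u (j+1)‖ := by simp [hgdef]
              rw [hgj, ha]
              exact mul_le_mul_of_nonneg_right (hjle j hj) (norm_nonneg _)
          _ = (n:ℝ) * ∑ j ∈ Ico m n, g j := by rw [Finset.mul_sum]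
          _ ≤ ((n:ℝ)+1) * T m :=
              mul_le_mul (by linarith) htail hgsum0 (by linarith)
      · -- 1 < p
        have hpne : p ≠ 0 := hp0.ne'
        have hr : (0:ℝ) < p - 1 := by linarith
        have hrne : p - 1 ≠ 0 := hr.ne'
        set w : ℕ → ℝ := fun j => ((j:ℝ)+1) ^ (p-1)⁻¹ with hw
        set f : ℕ → ℝ := fun j => ((j:ℝ)+1) ^ ((p-2)/(p-1)) * ‖u (j+1)‖ with hf
        have hw0 : ∀ j, 0 ≤ w j := fun j => Real.rpow_nonneg (by positivity) _
        have hf0 : ∀ j, 0 ≤ f j := fun j =>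
          mul_nonneg (Real.rpow_nonneg (by positivity) _) (norm_nonneg _)
        have hwf : ∀ j, w j * f j = a j := by
          intro j
          have hjpos : (0:ℝ) < (j:ℝ) + 1 := by positivity
          rw [hw, hf, ha, ← mul_assoc, ← Real.rpow_add hjpos]
          have he : (p-1)⁻¹ + (p-2)/(p-1) = 1 := by field_simp; ring
          rw [he, Real.rpow_one]
        have hwfp : ∀ j, w j * f j ^ p = g j := by
          intro j
          have hjpos : (0:ℝ) < (j:ℝ) + 1 := by positivity
          rw [hw, hf, hgdef, Real.mul_rpow (Real.rpow_nonneg hjpos.le _) (norm_nonneg _),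
            ← Real.rpow_mul hjpos.le, ← mul_assoc, ← Real.rpow_add hjpos]
          have he : (p-1)⁻¹ + (p-2)/(p-1) * p = p - 1 := by field_simp; ring
          rw [he]
        have holder := Real.inner_le_weight_mul_Lp_of_nonneg (Ico m n) hp w f hw0 hf0
        have hsumw : ∑ j ∈ Ico m n, w j ≤ (n:ℝ) ^ (1 + (p-1)⁻¹) := by
          calc ∑ j ∈ Ico m n, w j ≤ ∑ _j ∈ Ico m n, (n:ℝ) ^ (p-1)⁻¹ :=
                Finset.sum_le_sum fun j hj =>
                  Real.rpow_le_rpow (by positivity) (hjle j hj) (by positivity)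
            _ = (Ico m n).card * (n:ℝ) ^ (p-1)⁻¹ := by
                rw [Finset.sum_const, nsmul_eq_mul]
            _ ≤ (n:ℝ) * (n:ℝ) ^ (p-1)⁻¹ := by
                have : ((Ico m n).card : ℝ) ≤ n := by
                  rw [Nat.card_Ico]; exact_mod_cast Nat.sub_le n m
                exact mul_le_mul_of_nonneg_right this (Real.rpow_nonneg hnpos.le _)
            _ = (n:ℝ) ^ (1 + (p-1)⁻¹) := by
                rw [Real.rpow_add hnpos, Real.rpow_one]
        have hfac1 : (∑ j ∈ Ico m n, w j) ^ (1 - p⁻¹) ≤ (n:ℝ) := by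
          calc (∑ j ∈ Ico m n, w j) ^ (1 - p⁻¹)
              ≤ ((n:ℝ) ^ (1 + (p-1)⁻¹)) ^ (1 - p⁻¹) :=
                Real.rpow_le_rpow (Finset.sum_nonneg fun j _ => hw0 j) hsumw
                  (by rw [sub_nonneg]; exact inv_le_one_of_one_le₀ hp)
            _ = (n:ℝ) := by
                rw [← Real.rpow_mul hnpos.le]
                have he : (1 + (p-1)⁻¹) * (1 - p⁻¹) = 1 := by field_simp; ring
                rw [he, Real.rpow_one]
        have hfac2 : (∑ j ∈ Ico m n, w j * f j ^ p) ^ p⁻¹ ≤ T m ^ (1/p) := by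
          rw [one_div]
          apply Real.rpow_le_rpow _ _ (by positivity)
          · exact Finset.sum_nonneg fun j _ => mul_nonneg (hw0 j) (Real.rpow_nonneg (hf0 j) _)
          · calc ∑ j ∈ Ico m n, w j * f j ^ p = ∑ j ∈ Ico m n, g j :=
                  Finset.sum_congr rfl fun j _ => hwfp j
              _ ≤ T m := htail
        calc ∑ j ∈ Ico m n, a j = ∑ j ∈ Ico m n, w j * f j :=
              Finset.sum_congr rfl fun j _ => (hwf j).symm
          _ ≤ (∑ j ∈ Ico m n, w j) ^ (1 - p⁻¹) * (∑ j ∈ Ico m n, w j * f j ^ p) ^ p⁻¹ := holder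
          _ ≤ (n:ℝ) * (T m ^ (1/p)) := by
              apply mul_le_mul hfac1 hfac2 _ hnpos.le
              exact Real.rpow_nonneg
                (Finset.sum_nonneg fun j _ => mul_nonneg (hw0 j) (Real.rpow_nonneg (hf0 j) _)) _
          _ ≤ ((n:ℝ)+1) * T m ^ (1/p) := by
              apply mul_le_mul_of_nonneg_right (by linarith) (Real.rpow_nonneg (hT0 m) _)
  -- the algebraic identity
  have hid : ∀ n : ℕ, ∑ k ∈ range (n+1), (k:ℝ) • u k
      = ((n:ℝ)+1) • (∑ k ∈ range (n+1), u k)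
        - ∑ i ∈ range (n+1), ∑ k ∈ range (i+1), u k := by
    intro n
    induction n with
    | zero => simp
    | succ n ih =>
      have h1 : ∑ k ∈ range (n+1+1), (k:ℝ) • u k
          = (∑ k ∈ range (n+1), (k:ℝ) • u k) + ((n:ℝ)+1) • u (n+1) := by
        rw [Finset.sum_range_succ]; norm_cast
      have h2 : ∑ i ∈ range (n+1+1), ∑ k ∈ range (i+1), u k
          = (∑ i ∈ range (n+1), ∑ k ∈ range (i+1), u k) + ∑ k ∈ range (n+1+1), u k :=
        Finset.sum_range_succ _ _
      have h3 : ∑ k ∈ range (n+1+1), u k = (∑ k ∈ range (n+1), u k) + u (n+1) :=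
        Finset.sum_range_succ _ _
      rw [h1, ih, h2, h3]
      push_cast
      module
  -- norm bound on the difference
  have hnorm : ∀ n : ℕ, ‖(∑ k ∈ range (n+1), u k)
      - ((n:ℝ)+1)⁻¹ • ∑ i ∈ range (n+1), ∑ k ∈ range (i+1), u k‖
      ≤ ((n:ℝ)+1)⁻¹ * ∑ j ∈ range n, a j := by
    intro n
    have hne : ((n:ℝ)+1) ≠ 0 := by positivity
    have hrepr : (∑ k ∈ range (n+1), u k)
        - ((n:ℝ)+1)⁻¹ • ∑ i ∈ range (n+1), ∑ k ∈ range (i+1), u k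
        = ((n:ℝ)+1)⁻¹ • ∑ k ∈ range (n+1), (k:ℝ) • u k := by
      rw [hid n, smul_sub, inv_smul_smul₀ hne]
    rw [hrepr, norm_smul]
    have h1 : ‖((n:ℝ)+1)⁻¹‖ = ((n:ℝ)+1)⁻¹ := by
      rw [Real.norm_eq_abs, abs_of_pos (by positivity)]
    rw [h1]
    apply mul_le_mul_of_nonneg_left _ (by positivity)
    calc ‖∑ k ∈ range (n+1), (k:ℝ) • u k‖ ≤ ∑ k ∈ range (n+1), ‖(k:ℝ) • u k‖ :=
          norm_sum_le _ _
      _ = ∑ j ∈ range n, a j := by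
          rw [Finset.sum_range_succ' (fun k => ‖(k:ℝ) • u k‖)]
          simp only [Nat.cast_zero, zero_smul, norm_zero, add_zero, norm_smul,
            Real.norm_eq_abs]
          refine Finset.sum_congr rfl fun j _ => ?_
          rw [Nat.cast_add, Nat.cast_one, abs_of_pos (by positivity), ha]
  -- the averaged sequence tends to zero
  have hB : Tendsto (fun n : ℕ => ((n:ℝ)+1)⁻¹ * ∑ j ∈ range n, a j) atTop (𝓝 0) := by
    rw [Metric.tendsto_atTop]
    intro ε hε
    have hε2 : (0:ℝ) < (ε/2) ^ p := Real.rpow_pos_of_pos (by linarith) p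
    obtain ⟨m, hm⟩ := (hTtend.eventually_lt_const hε2).exists
    have hTm : T m ^ (1/p) ≤ ε/2 := by
      calc T m ^ (1/p) ≤ ((ε/2) ^ p) ^ (1/p) :=
            Real.rpow_le_rpow (hT0 m) hm.le (by positivity)
        _ = ε/2 := by
            rw [← Real.rpow_mul (by linarith), mul_one_div, div_self hp0.ne', Real.rpow_one]
    have hhead : Tendsto (fun n : ℕ => ((n:ℝ)+1)⁻¹ * ∑ j ∈ range m, a j) atTop (𝓝 0) := by
      have h1 : Tendsto (fun n : ℕ => 1 / ((n:ℝ)+1)) atTop (𝓝 0) :=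
        tendsto_one_div_add_atTop_nhds_zero_nat
      have := h1.mul_const (∑ j ∈ range m, a j)
      simpa [one_div] using this
    obtain ⟨N, hN⟩ := (Metric.tendsto_atTop.1 hhead) (ε/2) (by linarith)
    refine ⟨max N m, fun n hn => ?_⟩
    have hNn : N ≤ n := le_trans (le_max_left _ _) hn
    have hmn : m ≤ n := le_trans (le_max_right _ _) hn
    have hsplit : ∑ j ∈ range n, a j = ∑ j ∈ range m, a j + ∑ j ∈ Ico m n, a j := by
      rw [Finset.range_eq_Ico, Finset.range_eq_Ico]
      exact (Finset.sum_Ico_consecutive _ (Nat.zero_le m) hmn).symm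
    have hpos : (0:ℝ) < (n:ℝ) + 1 := by positivity
    have hhn := hN n hNn
    rw [Real.dist_eq, sub_zero, abs_of_nonneg (mul_nonneg (by positivity)
      (Finset.sum_nonneg fun j _ => ha0 j))] at hhn ⊢
    calc ((n:ℝ)+1)⁻¹ * ∑ j ∈ range n, a j
        = ((n:ℝ)+1)⁻¹ * ∑ j ∈ range m, a j + ((n:ℝ)+1)⁻¹ * ∑ j ∈ Ico m n, a j := by
          rw [hsplit, mul_add]
      _ ≤ ((n:ℝ)+1)⁻¹ * ∑ j ∈ range m, a j + ((n:ℝ)+1)⁻¹ * (((n:ℝ)+1) * T m ^ (1/p)) := by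
          apply add_le_add (le_refl _)
          exact mul_le_mul_of_nonneg_left (key m n) (by positivity)
      _ = ((n:ℝ)+1)⁻¹ * ∑ j ∈ range m, a j + T m ^ (1/p) := by
          rw [inv_mul_cancel_left₀ hpos.ne']
      _ < ε/2 + ε/2 := by
          apply add_lt_add_of_lt_of_le hhn hTm
      _ = ε := by ring
  -- conclude
  have hdiff : Tendsto (fun n : ℕ => (∑ k ∈ range (n+1), u k)
      - ((n:ℝ)+1)⁻¹ • ∑ i ∈ range (n+1), ∑ k ∈ range (i+1), u k) atTop (𝓝 0) :=
    squeeze_zero_norm hnorm hB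
  have := hdiff.add hC1
  simpa using this
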